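/- arXiv:1205.0963 — 2 statements merged into one kernel-verified Lean document; each statement's English description precedes it below -/
import Mathlib

section
/- A convex corner cannot be a foot of perpendicularity from outside: with notation as above, if the interior angle of the path at g on the side containing a is strictly less than π (i.e., angle u₁ u₂ < π measured through the side of a), then g cannot be a closest point of the path to a. -/
open InnerProductGeometry in
lemma aux_key (x u : EuclideanSpace ℝ (Fin 2)) (h1 : ‖u‖ = 1)
    (hd : 0 < (inner ℝ x u : ℝ)) (ε : ℝ) (hε : 0 < ε) :
    ∃ t : ℝ, 0 < t ∧ t ≤ ε ∧ ‖x - t • u‖ < ‖x‖ := by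
  set d : ℝ := inner ℝ x u with hdd
  refine ⟨min ε d, lt_min hε hd, min_le_left _ _, ?_⟩
  set t : ℝ := min ε d with ht
  have htpos : 0 < t := lt_min hε hd
  have htd : t ≤ d := min_le_right _ _
  have hsq : ‖x - t • u‖ ^ 2 < ‖x‖ ^ 2 := by
    have := @norm_sub_sq_real (EuclideanSpace ℝ (Fin 2)) _ _ x (t • u)
    rw [real_inner_smul_right, norm_smul, h1] at this
    have h2 : ‖x - t • u‖ ^ 2 = ‖x‖ ^ 2 - 2 * (t * d) + (|t|) ^ 2 := by
      rw [this, ← hdd, Real.norm_eq_abs]; ring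
    rw [h2, abs_of_pos htpos]
    nlinarith
  have := lt_of_pow_lt_pow_left₀ 2 (norm_nonneg x) hsq
  exact this

open InnerProductGeometry in
/-- A convex corner cannot be the foot of a shortest path from a point in its open
wedge: if `a` lies in the open wedge at `g` spanned by unit edge directions `u₁, u₂`
with `∠(u₁,u₂) < π`, then some point on one of the two edge segments is strictly closer
to `a` than `g` is. -/
theorem stmt_15 (g a u₁ u₂ : EuclideanSpace ℝ (Fin 2)) (h₁ : ‖u₁‖ = 1) (h₂ : ‖u₂‖ = 1)
    (hang : angle u₁ u₂ < Real.pi)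
    (ha : ∃ s t : ℝ, 0 < s ∧ 0 < t ∧ a = g + s • u₁ + t • u₂)
    (ε : ℝ) (hε : 0 < ε) :
    ∃ t : ℝ, 0 < t ∧ t ≤ ε ∧
      (dist a (g + t • u₁) < dist a g ∨ dist a (g + t • u₂) < dist a g) := by
  obtain ⟨s, t, hs, ht, hat⟩ := ha
  set x : EuclideanSpace ℝ (Fin 2) := a - g with hx
  have hxval : x = s • u₁ + t • u₂ := by
    rw [hx, hat]; abel
  set c : ℝ := inner ℝ u₁ u₂ with hc
  have hcgt : -1 < c := by
    have hcos : Real.cos (angle u₁ u₂) = c := by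
      rw [cos_angle, h₁, h₂]; simp [hc]
    have hmem₁ : angle u₁ u₂ ∈ Set.Icc 0 Real.pi := ⟨angle_nonneg _ _, le_of_lt hang⟩
    have hmem₂ : Real.pi ∈ Set.Icc 0 Real.pi := ⟨Real.pi_pos.le, le_refl _⟩
    have := Real.strictAntiOn_cos hmem₁ hmem₂ hang
    rw [Real.cos_pi, hcos] at this
    exact this
  have hd1 : (inner ℝ x u₁ : ℝ) = s + t * c := by
    rw [hxval]
    rw [inner_add_left, real_inner_smul_left, real_inner_smul_left,
      real_inner_self_eq_norm_sq, h₁, hc, real_inner_comm u₁ u₂]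
    ring
  have hd2 : (inner ℝ x u₂ : ℝ) = s * c + t := by
    rw [hxval]
    rw [inner_add_left, real_inner_smul_left, real_inner_smul_left,
      real_inner_self_eq_norm_sq, h₂, hc]
    ring
  have hpos : 0 < (inner ℝ x u₁ : ℝ) ∨ 0 < (inner ℝ x u₂ : ℝ) := by
    by_contra h
    push_neg at h
    obtain ⟨ha1, ha2⟩ := h
    rw [hd1] at ha1; rw [hd2] at ha2
    nlinarith
  have hdist : ∀ u : EuclideanSpace ℝ (Fin 2), ∀ r : ℝ,
      dist a (g + r • u) = ‖x - r • u‖ := by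
    intro u r
    rw [dist_eq_norm, hx]
    congr 1
    abel
  have hdg : dist a g = ‖x‖ := by rw [dist_eq_norm, hx]
  rcases hpos with hp | hp
  · obtain ⟨r, hr1, hr2, hr3⟩ := aux_key x u₁ h₁ hp ε hε
    exact ⟨r, hr1, hr2, Or.inl (by rw [hdist, hdg]; exact hr3)⟩
  · obtain ⟨r, hr1, hr2, hr3⟩ := aux_key x u₂ h₂ hp ε hε
    exact ⟨r, hr1, hr2, Or.inr (by rw [hdist, hdg]; exact hr3)⟩
end

section
/- Non-overlap of fan-joined regions: let q₀, …, q_k be points on a convex polygon Q in the plane (in order), and for each i attach to the edge/arc of Q a region R_i lying in the outward half-plane of that edge, with R_i contained in the outward normal strip over its base. Then distinct regions R_i and R_j have disjoint interiors. -/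
open RealInnerProductSpace

section FanHelpers
variable {E : Type*} [NormedAddCommGroup E] [InnerProductSpace ℝ E]

lemma decomp_aux {a b n x : E} (hn : ‖n‖ = 1) (hline : ⟪b - a, n⟫ = 0)
    (hx : ∃ p ∈ segment ℝ a b, ∃ t : ℝ, 0 ≤ t ∧ x = p + t • n) :
    0 ≤ ⟪x - a, n⟫ ∧ x - ⟪x - a, n⟫ • n ∈ segment ℝ a b := by
  obtain ⟨p, hp, t, ht, rfl⟩ := hx
  rw [segment_eq_image'] at hp
  obtain ⟨u, hu, rfl⟩ := hp
  have h1 : ⟪a + u • (b - a) + t • n - a, n⟫ = t := by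
    have : a + u • (b - a) + t • n - a = u • (b - a) + t • n := by abel
    rw [this, inner_add_left, inner_smul_left, inner_smul_left, hline,
      real_inner_self_eq_norm_sq, hn]
    simp
  rw [h1]
  refine ⟨ht, ?_⟩
  have : a + u • (b - a) + t • n - t • n = a + u • (b - a) := by abel
  rw [this, segment_eq_image']
  exact ⟨u, hu, rfl⟩

lemma foot_open {a b n x : E} (hab : a ≠ b) (hn : ‖n‖ = 1) (hline : ⟪b - a, n⟫ = 0)
    {R : Set E} (hR : R ⊆ {x | ∃ p ∈ segment ℝ a b, ∃ t : ℝ, 0 ≤ t ∧ x = p + t • n})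
    (hx : x ∈ interior R) :
    x - ⟪x - a, n⟫ • n ∈ openSegment ℝ a b := by
  rw [mem_interior_iff_mem_nhds, Metric.mem_nhds_iff] at hx
  obtain ⟨ε, hε, hball⟩ := hx
  set c := b - a with hc
  have hcne : c ≠ 0 := sub_ne_zero.mpr (Ne.symm hab)
  have hcpos : (0:ℝ) < ‖c‖ := norm_pos_iff.mpr hcne
  set δ : ℝ := ε / (2 * ‖c‖) with hδdef
  have hδ : 0 < δ := by positivity
  have key : ∀ σ : ℝ, σ = δ ∨ σ = -δ →
      ∃ u ∈ Set.Icc (0:ℝ) 1, x - ⟪x - a, n⟫ • n + σ • c = a + u • c := by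
    intro σ hσ
    have hmem : x + σ • c ∈ R := by
      apply hball
      have : dist (x + σ • c) x = |σ| * ‖c‖ := by
        rw [dist_eq_norm]
        simp [norm_smul, abs_eq_self.mpr]
      rw [Metric.mem_ball, this]
      have : |σ| = δ := by rcases hσ with rfl | rfl <;> simp [abs_of_pos hδ, abs_of_neg, hδ.le]
      rw [this, hδdef, div_mul_eq_mul_div, div_lt_iff₀ (by positivity)]
      nlinarith
    have hd := (decomp_aux hn hline (hR hmem)).2
    have hinner : ⟪x + σ • c - a, n⟫ = ⟪x - a, n⟫ := by
      have : x + σ • c - a = (x - a) + σ • c := by abel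
      rw [this, inner_add_left, inner_smul_left, hline]
      simp
    rw [hinner] at hd
    rw [segment_eq_image'] at hd
    obtain ⟨u, hu, heq⟩ := hd
    refine ⟨u, hu, ?_⟩
    have heq' : a + u • c = x + σ • c - ⟪x - a, n⟫ • n := heq
    linear_combination (norm := module) heq'.symm
  obtain ⟨u₁, hu₁, he₁⟩ := key δ (Or.inl rfl)
  obtain ⟨u₂, hu₂, he₂⟩ := key (-δ) (Or.inr rfl)
  have hfoot : x - ⟪x - a, n⟫ • n = a + (u₁ - δ) • c := by
    linear_combination (norm := module) he₁
  have hfoot2 : x - ⟪x - a, n⟫ • n = a + (u₂ + δ) • c := by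
    linear_combination (norm := module) he₂
  have huu : u₁ - δ = u₂ + δ := by
    have h2 : (u₁ - δ) • c = (u₂ + δ) • c := by
      have := hfoot.symm.trans hfoot2
      exact add_left_cancel this
    exact smul_left_injective ℝ hcne h2
  rw [hfoot, openSegment_eq_image']
  refine ⟨u₁ - δ, ⟨?_, ?_⟩, rfl⟩
  · rw [huu]; linarith [hu₂.1]
  · linarith [hu₁.2]

lemma dist_sq_ge {a n q x : E} (hn : ‖n‖ = 1)
    (ht : 0 ≤ ⟪x - a, n⟫) (hq : ⟪q - a, n⟫ ≤ 0) :
    ‖(x - ⟪x - a, n⟫ • n) - q‖ ^ 2 + ⟪x - a, n⟫ ^ 2 ≤ ‖x - q‖ ^ 2 := by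
  set t := ⟪x - a, n⟫ with htdef
  set p := x - t • n with hpdef
  have hxq : x - q = (p - q) + t • n := by rw [hpdef]; abel
  have hnn : ⟪n, n⟫ = (1:ℝ) := by
    rw [real_inner_self_eq_norm_sq, hn]; norm_num
  have hpan : ⟪p - a, n⟫ = 0 := by
    have : p - a = (x - a) - t • n := by rw [hpdef]; abel
    rw [this, inner_sub_left, inner_smul_left, hnn]
    simp [← htdef]
  have hpqn : 0 ≤ ⟪p - q, n⟫ := by
    have h : p - q = (p - a) - (q - a) := by abel
    rw [h, inner_sub_left, hpan]
    linarith
  rw [hxq, norm_add_sq_real]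
  have h1 : ⟪p - q, t • n⟫ = t * ⟪p - q, n⟫ := real_inner_smul_right _ _ _
  have h2 : ‖t • n‖ ^ 2 = t ^ 2 := by
    rw [norm_smul, hn, mul_one, Real.norm_eq_abs, sq_abs]
  nlinarith [mul_nonneg ht hpqn]

end FanHelpers

/-- Non-overlap of fan-joined regions: regions attached outward along distinct edges of
a convex polygon, each contained in the outward normal strip over its base edge, have
disjoint interiors. Edges are given as segments `[a i, b i]` on the boundary of the
convex set `K`, supported by hyperplanes with outward unit normals `n i`, with pairwise
disjoint relative interiors. -/
theorem stmt_16 {ι : Type*} (K : Set (EuclideanSpace ℝ (Fin 2)))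
    (hK : Convex ℝ K) (hKc : IsClosed K)
    (a b : ι → EuclideanSpace ℝ (Fin 2)) (n : ι → EuclideanSpace ℝ (Fin 2))
    (R : ι → Set (EuclideanSpace ℝ (Fin 2)))
    (hedge : ∀ i, segment ℝ (a i) (b i) ⊆ K)
    (hab : ∀ i, a i ≠ b i)
    (hn : ∀ i, ‖n i‖ = 1)
    (hsupp : ∀ i, ∀ x ∈ K, ⟪x - a i, n i⟫ ≤ 0)
    (hline : ∀ i, ⟪b i - a i, n i⟫ = 0)
    (hdisj : ∀ i j, i ≠ j → openSegment ℝ (a i) (b i) ∩ openSegment ℝ (a j) (b j) = ∅)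
    (hR : ∀ i, R i ⊆ {x | ∃ p ∈ segment ℝ (a i) (b i), ∃ t : ℝ, 0 ≤ t ∧ x = p + t • n i}) :
    ∀ i j, i ≠ j → interior (R i) ∩ interior (R j) = ∅ := by
  intro i j hij
  rw [Set.eq_empty_iff_forall_notMem]
  rintro x ⟨hxi, hxj⟩
  have hdi := decomp_aux (hn i) (hline i) (hR i (interior_subset hxi))
  have hdj := decomp_aux (hn j) (hline j) (hR j (interior_subset hxj))
  set ti := ⟪x - a i, n i⟫ with hti
  set tj := ⟪x - a j, n j⟫ with htj
  set p := x - ti • n i with hp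
  set q := x - tj • n j with hq
  have hpK : p ∈ K := hedge i hdi.2
  have hqK : q ∈ K := hedge j hdj.2
  have h1 := dist_sq_ge (hn i) hdi.1 (hsupp i q hqK)
  have h2 := dist_sq_ge (hn j) hdj.1 (hsupp j p hpK)
  have hxq : ‖x - q‖ ^ 2 = tj ^ 2 := by
    have : x - q = tj • n j := by rw [hq]; abel
    rw [this, norm_smul, hn j, mul_one, Real.norm_eq_abs, sq_abs]
  have hxp : ‖x - p‖ ^ 2 = ti ^ 2 := by
    have : x - p = ti • n i := by rw [hp]; abel
    rw [this, norm_smul, hn i, mul_one, Real.norm_eq_abs, sq_abs]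
  have hnrm : ‖q - p‖ = ‖p - q‖ := norm_sub_rev _ _
  have hpq : p = q := by
    have hle : ‖p - q‖ ^ 2 ≤ 0 := by
      rw [hxq] at h1
      rw [hxp, hnrm] at h2
      nlinarith
    have : ‖p - q‖ = 0 := le_antisymm (by nlinarith [norm_nonneg (p - q)]) (norm_nonneg _)
    exact sub_eq_zero.mp (norm_eq_zero.mp this)
  have hpo := foot_open (hab i) (hn i) (hline i) (hR i) hxi
  have hqo := foot_open (hab j) (hn j) (hline j) (hR j) hxj
  exact Set.eq_empty_iff_forall_notMem.mp (hdisj i j hij) p ⟨hpo, hpq ▸ hqo⟩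
end
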